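/- Let S and S' be c-colorable vertex sets of size k+1 in a graph G. The minimum length of a TAR(k)-reconfiguration sequence between S and S' equals twice the minimum length of a TJ-reconfiguration sequence between S and S' (where the minimum is infinity if no sequence exists). -/

import Mathlib

open Finset

variable {V : Type*}

/-- `S` is a `c`-colorable vertex set in `G`. -/
def ColSet (G : SimpleGraph V) (c : ℕ) (S : Finset V) : Prop :=
  (G.induce (S : Set V)).Colorable c

/-- One TAR(k) step between `c`-colorable sets. -/
def TARStep (G : SimpleGraph V) (c k : ℕ) [DecidableEq V] (A B : Finset V) : Prop :=
  ColSet G c A ∧ ColSet G c B ∧ k ≤ A.card ∧ k ≤ B.card ∧ (symmDiff A B).card = 1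

/-- One TJ step between `c`-colorable sets. -/
def TJStep (G : SimpleGraph V) (c : ℕ) [DecidableEq V] (A B : Finset V) : Prop :=
  ColSet G c A ∧ ColSet G c B ∧ (A \ B).card = 1 ∧ (B \ A).card = 1

/-- `l` is a TAR(k)-reconfiguration sequence from `S` to `S'`. -/
def TARSeq (G : SimpleGraph V) (c k : ℕ) [DecidableEq V] (S S' : Finset V)
    (l : List (Finset V)) : Prop :=
  l.head? = some S ∧ l.getLast? = some S' ∧ l.Chain' (TARStep G c k)

def TJSeq (G : SimpleGraph V) (c : ℕ) [DecidableEq V] (S S' : Finset V)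
    (l : List (Finset V)) : Prop :=
  l.head? = some S ∧ l.getLast? = some S' ∧ l.Chain' (TJStep G c)

def TARReach (G : SimpleGraph V) (c k : ℕ) [DecidableEq V] (S S' : Finset V) : Prop :=
  ∃ l, TARSeq G c k S S' l

def TJReach (G : SimpleGraph V) (c : ℕ) [DecidableEq V] (S S' : Finset V) : Prop :=
  ∃ l, TJSeq G c S S' l

/-- Length of a shortest TAR(k)-sequence (number of steps), `⊤` if none exists. -/
noncomputable def TARDist (G : SimpleGraph V) (c k : ℕ) [DecidableEq V]
    (S S' : Finset V) : ℕ∞ :=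
  sInf {n : ℕ∞ | ∃ l, TARSeq G c k S S' l ∧ (l.length : ℕ∞) = n + 1}

noncomputable def TJDist (G : SimpleGraph V) (c : ℕ) [DecidableEq V]
    (S S' : Finset V) : ℕ∞ :=
  sInf {n : ℕ∞ | ∃ l, TJSeq G c S S' l ∧ (l.length : ℕ∞) = n + 1}

/-- `S` is a maximal `c`-colorable set among subsets of `U`, of size exactly `k`
(`S` is "locked" in `G[U]`). -/
def LockedIn (G : SimpleGraph V) (c k : ℕ) (U S : Finset V) : Prop :=
  S.card = k ∧ ColSet G c S ∧ S ⊆ U ∧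
    ∀ T ⊆ U, ColSet G c T → S ⊆ T → T = S

/-- `S` is locked in `G` itself. -/
def Locked [Fintype V] (G : SimpleGraph V) (c k : ℕ) (S : Finset V) : Prop :=
  LockedIn G c k Finset.univ S

/-- `G` is an interval graph. -/
def IsIntervalGraph (G : SimpleGraph V) : Prop :=
  ∃ l r : V → ℝ, (∀ v, l v ≤ r v) ∧
    ∀ u v, G.Adj u v ↔ u ≠ v ∧ max (l u) (l v) ≤ min (r u) (r v)

/-- `G` is perfect: every induced subgraph has chromatic number equal to its
clique number, stated via the colorability/clique-free characterization. -/
def IsPerfect (G : SimpleGraph V) : Prop :=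
  ∀ (S : Set V) (c : ℕ), (G.induce S).Colorable c ↔ (G.induce S).CliqueFree (c + 1)
section Helpers

variable [DecidableEq V] {G : SimpleGraph V} {c k : ℕ}

set_option linter.deprecated false in
theorem chain'_cons_cons_aux {α : Type*} {R : α → α → Prop} {a b : α} {l : List α} :
    List.Chain' R (a :: b :: l) ↔ R a b ∧ List.Chain' R (b :: l) := List.isChain_cons_cons

set_option linter.deprecated false in
theorem chain'_append_aux {α : Type*} {R : α → α → Prop} {l₁ l₂ : List α} :
    List.Chain' R (l₁ ++ l₂) ↔ List.Chain' R l₁ ∧ List.Chain' R l₂ ∧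
      ∀ x ∈ l₁.getLast?, ∀ y ∈ l₂.head?, R x y := List.isChain_append

set_option linter.deprecated false in
theorem chain'_singleton_aux {α : Type*} {R : α → α → Prop} (a : α) :
    List.Chain' R [a] := List.isChain_singleton a

lemma colSet_mono {A B : Finset V} (h : ColSet G c A) (hsub : B ⊆ A) : ColSet G c B := by
  obtain ⟨C⟩ := h
  exact ⟨SimpleGraph.Coloring.mk (fun v => C ⟨v.1, hsub v.2⟩) (fun {u w} huv => C.valid huv)⟩

lemma step_shape {A B : Finset V} (h : (symmDiff A B).card = 1) :
    (∃ v ∉ A, B = insert v A) ∨ (∃ v ∉ B, A = insert v B) := by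
  obtain ⟨v, hv⟩ := Finset.card_eq_one.1 h
  have hmem : ∀ x, x ∈ symmDiff A B ↔ x = v := by simp [hv]
  have hv' := (hmem v).2 rfl
  rw [Finset.mem_symmDiff] at hv'
  rcases hv' with ⟨hvA, hvB⟩ | ⟨hvB, hvA⟩
  · right
    refine ⟨v, hvB, ?_⟩
    ext x
    simp only [Finset.mem_insert]
    by_cases hx : x = v
    · subst hx; simp [hvA]
    · have := hmem x; rw [Finset.mem_symmDiff] at this; tauto
  · left
    refine ⟨v, hvA, ?_⟩
    ext x
    simp only [Finset.mem_insert]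
    by_cases hx : x = v
    · subst hx; simp [hvB]
    · have := hmem x; rw [Finset.mem_symmDiff] at this; tauto

lemma tarStep_card {A B : Finset V} (h : TARStep G c k A B) :
    B.card = A.card + 1 ∨ A.card = B.card + 1 := by
  rcases step_shape h.2.2.2.2 with ⟨v, hv, rfl⟩ | ⟨v, hv, rfl⟩
  · left; exact Finset.card_insert_of_notMem hv
  · right; exact Finset.card_insert_of_notMem hv

lemma tarStep_up {A B : Finset V} (h : TARStep G c k A B) (hc : A.card < B.card) :
    ∃ v ∉ A, B = insert v A := by
  rcases step_shape h.2.2.2.2 with h' | ⟨v, hv, rfl⟩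
  · exact h'
  · rw [Finset.card_insert_of_notMem hv] at hc; omega

lemma tarStep_down {A B : Finset V} (h : TARStep G c k A B) (hc : B.card < A.card) :
    ∃ v ∉ B, A = insert v B := by
  rcases step_shape h.2.2.2.2 with ⟨v, hv, rfl⟩ | h'
  · rw [Finset.card_insert_of_notMem hv] at hc; omega
  · exact h'

lemma symmDiff_erase {X : Finset V} {z : V} (hz : z ∈ X) :
    symmDiff X (X.erase z) = {z} := by
  ext a
  rw [Finset.mem_symmDiff]
  simp only [Finset.mem_erase, Finset.mem_singleton]
  by_cases haz : a = z <;> simp [haz, hz] <;> tauto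

lemma head?_append_cons {α : Type*} (l₁ : List α) (a : α) (t t' : List α) :
    (l₁ ++ a :: t).head? = (l₁ ++ a :: t').head? := by
  cases l₁ <;> simp

lemma getLast?_append_cons {α : Type*} (l₁ l₁' : List α) (a : α) (t : List α) :
    (l₁ ++ a :: t).getLast? = (l₁' ++ a :: t).getLast? := by
  rw [List.getLast?_append, List.getLast?_append]
  rcases hq : (a :: t).getLast? with _ | x
  · simp at hq
  · simp

lemma climb :
    ∀ (l : List (Finset V)) (Y : Finset V),
      (Y :: l).Chain' (TARStep G c k) → k + 2 ≤ Y.card →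
      (∀ L, (Y :: l).getLast? = some L → L.card ≤ k + 1) →
      (∃ Z l', l = Z :: l' ∧ Z.card < Y.card) ∨
      (∃ l₁ X' Y' Z' l₂, Y :: l = l₁ ++ X' :: Y' :: Z' :: l₂ ∧
        X'.card < Y'.card ∧ Z'.card < Y'.card ∧ k + 2 ≤ Y'.card) := by
  intro l
  induction l with
  | nil =>
    intro Y _ hY hlast
    have := hlast Y rfl
    omega
  | cons Z l' ih =>
    intro Y hch hY hlast
    rw [chain'_cons_cons_aux] at hch
    rcases tarStep_card hch.1 with hc | hc
    · rcases ih Z hch.2 (by omega)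
        (fun L hL => hlast L (by rwa [List.getLast?_cons_cons])) with h | h
      · obtain ⟨W, l'', rfl, hW⟩ := h
        right
        exact ⟨[], Y, Z, W, l'', rfl, by omega, hW, by omega⟩
      · obtain ⟨l₁, X', Y', Z', l₂, heq, h1, h2, h3⟩ := h
        right
        exact ⟨Y :: l₁, X', Y', Z', l₂, by rw [List.cons_append, ← heq], h1, h2, h3⟩
    · left
      exact ⟨Z, l', rfl, by omega⟩

lemma find_peak :
    ∀ (l : List (Finset V)), l.Chain' (TARStep G c k) →
      (∀ A, l.head? = some A → A.card ≤ k + 1) →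
      (∀ A, l.getLast? = some A → A.card ≤ k + 1) →
      (∃ W ∈ l, k + 2 ≤ W.card) →
      ∃ l₁ X Y Z l₂, l = l₁ ++ X :: Y :: Z :: l₂ ∧
        X.card < Y.card ∧ Z.card < Y.card ∧ k + 2 ≤ Y.card := by
  intro l
  induction l with
  | nil => rintro _ _ _ ⟨W, hW, _⟩; simp at hW
  | cons A t ih =>
    intro hch hh hl hW
    have hA : A.card ≤ k + 1 := hh A rfl
    obtain ⟨W, hWmem, hWc⟩ := hW
    have hWt : W ∈ t := by
      rcases List.mem_cons.1 hWmem with rfl | h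
      · omega
      · exact h
    cases t with
    | nil => simp at hWt
    | cons B t' =>
      rw [chain'_cons_cons_aux] at hch
      obtain ⟨hAB, hch'⟩ := hch
      by_cases hB : B.card ≤ k + 1
      · obtain ⟨l₁, X, Y, Z, l₂, heq, h1, h2, h3⟩ :=
          ih hch' (fun A' h => by rw [List.head?_cons, Option.some_inj] at h; rwa [← h])
            (fun A' h => hl A' (by rwa [List.getLast?_cons_cons])) ⟨W, hWt, hWc⟩
        exact ⟨A :: l₁, X, Y, Z, l₂, by rw [List.cons_append, ← heq], h1, h2, h3⟩
      · push_neg at hB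
        rcases climb t' B hch' (by omega)
            (fun L hL => hl L (by rwa [List.getLast?_cons_cons])) with h | h
        · obtain ⟨Z, l'', rfl, hZ⟩ := h
          exact ⟨[], A, B, Z, l'', rfl, by omega, hZ, by omega⟩
        · obtain ⟨l₁, X', Y', Z', l₂, heq, h1, h2, h3⟩ := h
          exact ⟨A :: l₁, X', Y', Z', l₂, by rw [List.cons_append, ← heq], h1, h2, h3⟩

lemma norm :
    ∀ (N : ℕ) (l : List (Finset V)),
      (l.map Finset.card).sum + l.length ≤ N →
      l.Chain' (TARStep G c k) →
      (∀ A, l.head? = some A → A.card ≤ k + 1) →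
      (∀ A, l.getLast? = some A → A.card ≤ k + 1) →
      ∃ l' : List (Finset V),
        l'.Chain' (TARStep G c k) ∧ l'.head? = l.head? ∧ l'.getLast? = l.getLast? ∧
        l'.length ≤ l.length ∧ ∀ X ∈ l', X.card ≤ k + 1 := by
  intro N
  induction N with
  | zero =>
    intro l hμ hch _ _
    have hl : l = [] := by
      cases l with
      | nil => rfl
      | cons a t => simp only [List.length_cons] at hμ; omega
    subst hl
    exact ⟨[], List.isChain_nil, rfl, rfl, le_rfl, by simp⟩
  | succ N ih =>
    intro l hμ hch hh hl
    by_cases hall : ∀ X ∈ l, X.card ≤ k + 1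
    · exact ⟨l, hch, rfl, rfl, le_rfl, hall⟩
    push_neg at hall
    obtain ⟨W0, hW0m, hW0c⟩ := hall
    obtain ⟨l₁, X, Y, Z, l₂, rfl, hXY, hZY, hYc⟩ :=
      find_peak l hch hh hl ⟨W0, hW0m, by omega⟩
    rw [chain'_append_aux] at hch
    obtain ⟨hc1, hc2, hc3⟩ := hch
    rw [chain'_cons_cons_aux, chain'_cons_cons_aux] at hc2
    obtain ⟨hXYs, hYZs, hc2⟩ := hc2
    obtain ⟨x, hx, hYeq⟩ := tarStep_up hXYs hXY
    obtain ⟨z, hz, hYeq'⟩ := tarStep_down hYZs hZY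
    have hXe : X = Y.erase x := by rw [hYeq, Finset.erase_insert hx]
    have hZe : Z = Y.erase z := by rw [hYeq', Finset.erase_insert hz]
    by_cases hXZ : X = Z
    · -- drop the peak: replace X :: Y :: Z :: l₂ by X :: l₂
      have hlast_eq : (l₁ ++ X :: l₂).getLast? = (l₁ ++ X :: Y :: Z :: l₂).getLast? := by
        cases l₂ with
        | nil =>
          rw [show l₁ ++ X :: Y :: Z :: ([] : List (Finset V)) = (l₁ ++ [X, Y]) ++ [Z] by simp,
            show l₁ ++ X :: ([] : List (Finset V)) = l₁ ++ [X] from rfl,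
            List.getLast?_concat, List.getLast?_concat, hXZ]
        | cons P l₂' =>
          rw [show l₁ ++ X :: Y :: Z :: P :: l₂' = (l₁ ++ [X, Y, Z]) ++ P :: l₂' by simp,
            show l₁ ++ X :: P :: l₂' = (l₁ ++ [X]) ++ P :: l₂' by simp]
          exact getLast?_append_cons _ _ _ _
      have hhead_eq : (l₁ ++ X :: l₂).head? = (l₁ ++ X :: Y :: Z :: l₂).head? :=
        head?_append_cons l₁ X l₂ (Y :: Z :: l₂)
      have hch' : (l₁ ++ X :: l₂).Chain' (TARStep G c k) := by
        rw [chain'_append_aux]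
        refine ⟨hc1, ?_, ?_⟩
        · rw [hXZ]; exact hc2
        · intro a ha b hb
          rw [List.head?_cons, Option.mem_def, Option.some_inj] at hb
          subst hb
          exact hc3 a ha X rfl
      have hμ' : ((l₁ ++ X :: l₂).map Finset.card).sum + (l₁ ++ X :: l₂).length ≤ N := by
        simp only [List.map_append, List.sum_append, List.length_append, List.map_cons,
          List.sum_cons, List.length_cons] at hμ ⊢
        omega
      obtain ⟨l', h1, h2, h3, h4, h5⟩ := ih (l₁ ++ X :: l₂) hμ' hch'
        (fun A hA => hh A (by rwa [hhead_eq] at hA))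
        (fun A hA => hl A (by rwa [hlast_eq] at hA))
      refine ⟨l', h1, h2.trans hhead_eq, h3.trans hlast_eq, ?_, h5⟩
      refine le_trans h4 ?_
      simp only [List.length_append, List.length_cons]
      omega
    · -- lower the peak: replace Y by W := X.erase z
      have hzx : z ≠ x := by
        intro h
        apply hXZ
        rw [hXe, hZe, h]
      have hzX : z ∈ X := by
        rw [hXe, Finset.mem_erase]
        exact ⟨hzx, hYeq' ▸ Finset.mem_insert_self z Z⟩
      have hxZ : x ∈ Z := by
        rw [hZe, Finset.mem_erase]
        exact ⟨fun h => hzx h.symm, hYeq ▸ Finset.mem_insert_self x X⟩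
      set W := X.erase z with hW
      have hWZ : W = Z.erase x := by
        rw [hW, hXe, hZe]
        ext a
        simp only [Finset.mem_erase]
        tauto
      have hcardX : X.card + 1 = Y.card := by
        rw [hYeq, Finset.card_insert_of_notMem hx]
      have hcardZ : Z.card + 1 = Y.card := by
        rw [hYeq', Finset.card_insert_of_notMem hz]
      have hcardW : W.card + 1 = X.card := by
        rw [hW, Finset.card_erase_of_mem hzX]
        have : 1 ≤ X.card := Finset.card_pos.2 ⟨z, hzX⟩
        omega
      have stepXW : TARStep G c k X W :=
        ⟨hXYs.1, colSet_mono hXYs.1 (Finset.erase_subset _ _), hXYs.2.2.1,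
          by omega, by rw [hW, symmDiff_erase hzX]; simp⟩
      have stepWZ : TARStep G c k W Z :=
        ⟨colSet_mono hXYs.1 (Finset.erase_subset _ _), hYZs.2.1, by omega, hYZs.2.2.2.1,
          by rw [hWZ, symmDiff_comm, symmDiff_erase hxZ]; simp⟩
      have hch' : (l₁ ++ X :: W :: Z :: l₂).Chain' (TARStep G c k) := by
        rw [chain'_append_aux]
        refine ⟨hc1, ?_, ?_⟩
        · rw [chain'_cons_cons_aux, chain'_cons_cons_aux]
          exact ⟨stepXW, stepWZ, hc2⟩
        · intro a ha b hb
          rw [List.head?_cons, Option.mem_def, Option.some_inj] at hb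
          subst hb
          exact hc3 a ha X rfl
      have hμ' : ((l₁ ++ X :: W :: Z :: l₂).map Finset.card).sum
          + (l₁ ++ X :: W :: Z :: l₂).length ≤ N := by
        simp only [List.map_append, List.sum_append, List.length_append, List.map_cons,
          List.sum_cons, List.length_cons] at hμ ⊢
        omega
      have hhead_eq : (l₁ ++ X :: W :: Z :: l₂).head? = (l₁ ++ X :: Y :: Z :: l₂).head? :=
        head?_append_cons l₁ X _ _
      have hlast_eq : (l₁ ++ X :: W :: Z :: l₂).getLast? = (l₁ ++ X :: Y :: Z :: l₂).getLast? := by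
        rw [show l₁ ++ X :: W :: Z :: l₂ = (l₁ ++ [X, W]) ++ Z :: l₂ by simp,
          show l₁ ++ X :: Y :: Z :: l₂ = (l₁ ++ [X, Y]) ++ Z :: l₂ by simp]
        exact getLast?_append_cons _ _ _ _
      obtain ⟨l', h1, h2, h3, h4, h5⟩ := ih (l₁ ++ X :: W :: Z :: l₂) hμ' hch'
        (fun A hA => hh A (by rwa [hhead_eq] at hA))
        (fun A hA => hl A (by rwa [hlast_eq] at hA))
      refine ⟨l', h1, h2.trans hhead_eq, h3.trans hlast_eq, ?_, h5⟩
      refine le_trans h4 ?_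
      simp

lemma extract :
    ∀ (n : ℕ) (l : List (Finset V)), l.length ≤ n → l ≠ [] →
      l.Chain' (TARStep G c k) →
      (∀ X ∈ l, X.card ≤ k + 1) →
      (∀ A, l.head? = some A → A.card = k + 1) →
      (∀ A, l.getLast? = some A → A.card = k + 1) →
      ∃ t : List (Finset V),
        t.Chain' (TJStep G c) ∧ t.head? = l.head? ∧ t.getLast? = l.getLast? ∧
        2 * t.length ≤ l.length + 1 := by
  intro n
  induction n with
  | zero =>
    intro l hlen hne _ _ _ _
    cases l with
    | nil => exact absurd rfl hne
    | cons a t => simp at hlen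
  | succ n ih =>
    intro l hlen hne hch hall hh hl
    match l with
    | [A] =>
      exact ⟨[A], chain'_singleton_aux A, rfl, rfl, by simp⟩
    | [A, B] =>
      have hA : A.card = k + 1 := hh A rfl
      have hB : B.card = k + 1 := hl B (by simp)
      rw [chain'_cons_cons_aux] at hch
      rcases tarStep_card hch.1 with h | h <;> omega
    | A :: B :: C :: rest =>
      have hA : A.card = k + 1 := hh A rfl
      rw [chain'_cons_cons_aux, chain'_cons_cons_aux] at hch
      obtain ⟨hAB, hBC, hch'⟩ := hch
      have hBle : B.card ≤ k + 1 := hall B (by simp)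
      have hBcard : B.card = k := by
        rcases tarStep_card hAB with h | h <;> omega
      have hCcard : C.card = k + 1 := by
        have := hBC.2.2.2.1
        rcases tarStep_card hBC with h | h <;> omega
      obtain ⟨v, hv, hAeq⟩ := tarStep_down hAB (by omega)
      obtain ⟨w, hw, hCeq⟩ := tarStep_up hBC (by omega)
      have hlast_shift : (C :: rest).getLast? = (A :: B :: C :: rest).getLast? := by
        rw [List.getLast?_cons_cons, List.getLast?_cons_cons]
      by_cases hAC : A = C
      · -- backtracking step; drop B and C
        obtain ⟨t, h1, h2, h3, h4⟩ := ih (A :: rest)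
          (by simp only [List.length_cons] at hlen ⊢; omega)
          (by simp)
          (by rw [hAC]; exact hch')
          (fun X hX => by
            rcases List.mem_cons.1 hX with rfl | hX
            · exact hall X (by simp)
            · exact hall X (by simp [hX]))
          (fun A' h => by rw [List.head?_cons, Option.some_inj] at h; rw [← h, hA])
          (fun A' h => by
            cases rest with
            | nil =>
              rw [List.getLast?_singleton, Option.some_inj] at h
              rw [← h, hA]
            | cons P rest' =>
              apply hl
              rw [← hlast_shift, List.getLast?_cons_cons]
              rwa [List.getLast?_cons_cons] at h)
        refine ⟨t, h1, h2, ?_, ?_⟩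
        · rw [h3]
          cases rest with
          | nil =>
            rw [← hlast_shift]
            simp [hAC]
          | cons P rest' =>
            rw [← hlast_shift, List.getLast?_cons_cons, List.getLast?_cons_cons]
        · simp only [List.length_cons] at h4 ⊢
          omega
      · -- genuine jump from A to C
        have hvw : v ≠ w := by
          intro h
          apply hAC
          rw [hAeq, hCeq, h]
        have hstep : TJStep G c A C := by
          refine ⟨hAB.1, hBC.2.1, ?_, ?_⟩
          · have : A \ C = {v} := by
              ext a
              rw [hAeq, hCeq]
              simp only [Finset.mem_sdiff, Finset.mem_insert, Finset.mem_singleton]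
              constructor
              · rintro ⟨rfl | ha, h2⟩
                · rfl
                · exact absurd (Or.inr ha) h2
              · rintro rfl
                exact ⟨Or.inl rfl, by rintro (h | h); exact hvw h; exact hv h⟩
            rw [this, Finset.card_singleton]
          · have : C \ A = {w} := by
              ext a
              rw [hAeq, hCeq]
              simp only [Finset.mem_sdiff, Finset.mem_insert, Finset.mem_singleton]
              constructor
              · rintro ⟨rfl | ha, h2⟩
                · rfl
                · exact absurd (Or.inr ha) h2
              · rintro rfl
                exact ⟨Or.inl rfl, by rintro (h | h); exact hvw h.symm; exact hw h⟩
            rw [this, Finset.card_singleton]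
        obtain ⟨t, h1, h2, h3, h4⟩ := ih (C :: rest)
          (by simp only [List.length_cons] at hlen ⊢; omega)
          (by simp)
          hch'
          (fun X hX => hall X (by simp [List.mem_cons.1 hX]))
          (fun A' h => by rw [List.head?_cons, Option.some_inj] at h; rw [← h, hCcard])
          (fun A' h => hl A' (by rwa [← hlast_shift]))
        cases t with
        | nil => simp at h2
        | cons T t' =>
          rw [List.head?_cons, List.head?_cons, Option.some_inj] at h2
          subst h2
          refine ⟨A :: T :: t', ?_, rfl, ?_, ?_⟩
          · rw [chain'_cons_cons_aux]
            exact ⟨hstep, h1⟩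
          · rw [List.getLast?_cons_cons, h3, hlast_shift]
          · simp only [List.length_cons] at h4 ⊢
            omega

lemma tjStep_card {A B : Finset V} (h : TJStep G c A B) : A.card = B.card := by
  have h1 := Finset.card_sdiff_add_card_inter A B
  have h2 := Finset.card_sdiff_add_card_inter B A
  rw [Finset.inter_comm] at h2
  have := h.2.2.1
  have := h.2.2.2
  omega

lemma double :
    ∀ (l : List (Finset V)), l.Chain' (TJStep G c) →
      (∀ A, l.head? = some A → A.card = k + 1) →
      l ≠ [] →
      ∃ m : List (Finset V),
        m.Chain' (TARStep G c k) ∧ m.head? = l.head? ∧ m.getLast? = l.getLast? ∧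
        m.length + 1 = 2 * l.length := by
  intro l
  induction l with
  | nil => intro _ _ h; exact absurd rfl h
  | cons A t ih =>
    intro hch hh _
    cases t with
    | nil => exact ⟨[A], chain'_singleton_aux A, rfl, rfl, by simp⟩
    | cons B t' =>
      rw [chain'_cons_cons_aux] at hch
      obtain ⟨hAB, hch'⟩ := hch
      have hA : A.card = k + 1 := hh A rfl
      have hB : B.card = k + 1 := (tjStep_card hAB) ▸ hA
      obtain ⟨m, hm, hmh, hml, hmlen⟩ := ih hch'
        (fun A' h => by rw [List.head?_cons, Option.some_inj] at h; rw [← h, hB])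
        (by simp)
      have hDA : A ∩ B ⊆ A := Finset.inter_subset_left
      have hDcard : (A ∩ B).card = k := by
        have h1 := Finset.card_sdiff_add_card_inter A B
        have := hAB.2.2.1
        omega
      have stepAD : TARStep G c k A (A ∩ B) := by
        refine ⟨hAB.1, colSet_mono hAB.1 hDA, by omega, by omega, ?_⟩
        rw [show symmDiff A (A ∩ B) = (A \ (A ∩ B)) ∪ ((A ∩ B) \ A) from by
            rw [symmDiff_def]; rfl,
          Finset.sdiff_inter_self_left,
          Finset.sdiff_eq_empty_iff_subset.2 hDA, Finset.union_empty]
        exact hAB.2.2.1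
      have stepDB : TARStep G c k (A ∩ B) B := by
        refine ⟨colSet_mono hAB.1 hDA, hAB.2.1, by omega, by omega, ?_⟩
        rw [show symmDiff (A ∩ B) B = ((A ∩ B) \ B) ∪ (B \ (A ∩ B)) from by
            rw [symmDiff_def]; rfl,
          Finset.sdiff_eq_empty_iff_subset.2
          (Finset.inter_subset_right), Finset.empty_union, Finset.inter_comm,
          Finset.sdiff_inter_self_left]
        exact hAB.2.2.2
      cases m with
      | nil => simp at hmh
      | cons M m' =>
        rw [List.head?_cons, List.head?_cons, Option.some_inj] at hmh
        subst hmh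
        refine ⟨A :: (A ∩ M) :: M :: m', ?_, rfl, ?_, ?_⟩
        · rw [chain'_cons_cons_aux, chain'_cons_cons_aux]
          exact ⟨stepAD, stepDB, hm⟩
        · rw [List.getLast?_cons_cons, List.getLast?_cons_cons, List.getLast?_cons_cons]
          exact hml
        · simp only [List.length_cons] at hmlen ⊢
          omega

end Helpers

theorem tar_dist_eq_two_mul_tj_dist {V : Type*} [DecidableEq V] (G : SimpleGraph V)
    (c k : ℕ) (S S' : Finset V) (hS : ColSet G c S) (hS' : ColSet G c S')
    (hcard : S.card = k + 1) (hcard' : S'.card = k + 1) :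
    TARDist G c k S S' = 2 * TJDist G c S S' := by
  classical
  -- From any TAR sequence, produce a TJ sequence of at most half the steps.
  have key : ∀ l, TARSeq G c k S S' l →
      ∃ t, TJSeq G c S S' t ∧ 2 * t.length ≤ l.length + 1 := by
    rintro l ⟨hhead, hlast, hch⟩
    obtain ⟨l', hch', hh', hl', hlen', hall'⟩ :=
      norm ((l.map Finset.card).sum + l.length) l le_rfl hch
        (fun A hA => by
          rw [hhead, Option.some_inj] at hA; rw [← hA, hcard])
        (fun A hA => by
          rw [hlast, Option.some_inj] at hA; rw [← hA, hcard'])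
    have hh'' : l'.head? = some S := hh'.trans hhead
    have hl'' : l'.getLast? = some S' := hl'.trans hlast
    have hne : l' ≠ [] := by
      intro h; rw [h] at hh''; simp at hh''
    obtain ⟨t, hcht, hth, htl, htlen⟩ := extract l'.length l' le_rfl hne hch' hall'
      (fun A hA => by rw [hh'', Option.some_inj] at hA; rw [← hA, hcard])
      (fun A hA => by rw [hl'', Option.some_inj] at hA; rw [← hA, hcard'])
    exact ⟨t, ⟨hth.trans hh'', htl.trans hl'', hcht⟩, by omega⟩
  by_cases hreach : ∃ l, TJSeq G c S S' l
  · obtain ⟨l0, hl0⟩ := hreach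
    have hl0ne : l0 ≠ [] := by
      intro h; rw [h] at hl0; exact (by simpa using hl0.1)
    have hP : ∃ n : ℕ, ∃ l, TJSeq G c S S' l ∧ l.length = n + 1 := by
      refine ⟨l0.length - 1, l0, hl0, ?_⟩
      have : 0 < l0.length := List.length_pos_iff.2 hl0ne
      omega
    set n₀ := Nat.find hP with hn₀
    obtain ⟨lmin, hlmin, hlminlen⟩ := Nat.find_spec hP
    have hTJd : TJDist G c S S' = (n₀ : ℕ∞) := by
      apply le_antisymm
      · apply sInf_le
        refine ⟨lmin, hlmin, ?_⟩
        rw [hlminlen]; push_cast; ring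
      · apply le_sInf
        rintro m ⟨l, hl, hlen⟩
        have hm : m ≠ ⊤ := by
          rintro rfl; simp at hlen
        lift m to ℕ using hm
        have hml : l.length = m + 1 := by exact_mod_cast hlen
        exact_mod_cast Nat.find_min' hP ⟨l, hl, hml⟩
    have hTARd : TARDist G c k S S' = ((2 * n₀ : ℕ) : ℕ∞) := by
      apply le_antisymm
      · apply sInf_le
        obtain ⟨m, hm, hmh, hml, hmlen⟩ := double lmin hlmin.2.2
          (fun A hA => by
            rw [hlmin.1, Option.some_inj] at hA; rw [← hA, hcard])
          (by intro h; rw [h] at hlmin; exact (by simpa using hlmin.1))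
        refine ⟨m, ⟨hmh.trans hlmin.1, hml.trans hlmin.2.1, hm⟩, ?_⟩
        have : m.length = 2 * n₀ + 1 := by rw [hlminlen] at hmlen; omega
        rw [this]; push_cast; ring
      · apply le_sInf
        rintro m ⟨l, hl, hlen⟩
        have hm : m ≠ ⊤ := by
          rintro rfl; simp at hlen
        lift m to ℕ using hm
        have hml : l.length = m + 1 := by exact_mod_cast hlen
        obtain ⟨t, ht, htlen⟩ := key l hl
        have htne : t ≠ [] := by
          intro h; rw [h] at ht; exact (by simpa using ht.1)
        have htpos : 0 < t.length := List.length_pos_iff.2 htne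
        have hfind : n₀ ≤ t.length - 1 :=
          Nat.find_min' hP ⟨t, ht, by omega⟩
        exact_mod_cast (show 2 * n₀ ≤ m by omega)
    rw [hTARd, hTJd]
    push_cast
    ring
  · have hTJ : {n : ℕ∞ | ∃ l, TJSeq G c S S' l ∧ (l.length : ℕ∞) = n + 1} = ∅ := by
      ext n
      simp only [Set.mem_setOf_eq, Set.mem_empty_iff_false, iff_false, not_exists]
      rintro l ⟨hl, _⟩
      exact hreach ⟨l, hl⟩
    have hTAR : {n : ℕ∞ | ∃ l, TARSeq G c k S S' l ∧ (l.length : ℕ∞) = n + 1} = ∅ := by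
      ext n
      simp only [Set.mem_setOf_eq, Set.mem_empty_iff_false, iff_false, not_exists]
      rintro l ⟨hl, _⟩
      obtain ⟨t, ht, _⟩ := key l hl
      exact hreach ⟨t, ht⟩
    rw [TARDist, TJDist, hTJ, hTAR, sInf_empty]
    simp
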